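/- arXiv:2111.04763 — 2 statements merged into one kernel-verified Lean document; each statement's English description precedes it below -/
import Mathlib

section
/- Under the substitution q ↦ q^{-1}, the (x,q)-series satisfy C_m(x,q^{-1}) = C_{-m}(x,q), A_m(x,q^{-1}) = B_{-m}(x,q), and B_m(x,q^{-1}) = A_{-m}(x,q), for |q|<1 (interpreting the left sides via the convergent series for |q^{-1}|>1). -/
open Finset Filter

/-- The q-Pochhammer symbol (a;q)_k = ∏_{j=0}^{k-1}(1 - a q^j). -/
noncomputable def pochG (a q : ℂ) (k : ℕ) : ℂ := ∏ j ∈ Finset.range k, (1 - a * q ^ j)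

/-- The (x,q)-series A_m(x,q). -/
noncomputable def Aser (x q : ℂ) (m : ℤ) : ℂ :=
  ∑' k : ℕ, (-1) ^ k * q ^ ((k : ℤ) * (k + 1) / 2 + k * m) * x ^ ((k : ℤ) + m)
    / (pochG q q k * pochG (x ^ 2 * q) q k)

/-- The (x,q)-series B_m(x,q) = A_m(x^{-1},q). -/
noncomputable def Bser (x q : ℂ) (m : ℤ) : ℂ := Aser x⁻¹ q m

/-- The (x,q)-series C_m(x,q). -/
noncomputable def Cser (x q : ℂ) (m : ℤ) : ℂ :=
  ∑' k : ℕ, (-1) ^ k * q ^ ((k : ℤ) * (k + 1) / 2 + k * m)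
    / (pochG x⁻¹ q (k + 1) * pochG x q (k + 1))

/-- The Appell-Lerch type (x,q)-series LA_m(x,q). -/
noncomputable def LAser (x q : ℂ) (m : ℤ) : ℂ :=
  ∑' k : ℕ, (-1) ^ k * q ^ ((k : ℤ) * (k + 1) / 2 + k * m + k) * x ^ ((k : ℤ) + m + 1)
    / (pochG q q k * pochG (x ^ 2 * q) q k * (1 - x * q ^ k))

/-- LB_m(x,q) = LA_m(x^{-1},q). -/
noncomputable def LBser (x q : ℂ) (m : ℤ) : ℂ := LAser x⁻¹ q m


lemma pochG_inv (a q : ℂ) (ha : a ≠ 0) (hq : q ≠ 0) (k : ℕ) :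
    pochG a q⁻¹ k = (-a) ^ k * (q ^ (∑ j ∈ Finset.range k, j))⁻¹ * pochG a⁻¹ q k := by
  induction k with
  | zero => simp [pochG]
  | succ n ih =>
    simp only [pochG, Finset.prod_range_succ, Finset.sum_range_succ] at ih ⊢
    rw [ih, pow_add, pow_succ]
    have hqn : (q : ℂ) ^ n ≠ 0 := pow_ne_zero _ hq
    have hqs : (q : ℂ) ^ (∑ j ∈ Finset.range n, j) ≠ 0 := pow_ne_zero _ hq
    rw [inv_pow]
    field_simp
    ring

lemma zpow_k_mul (q : ℂ) (k : ℕ) (m : ℤ) : q ^ ((k : ℤ) * m) = (q ^ m) ^ k := by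
  rw [mul_comm, zpow_mul, zpow_natCast]

/-- For each k, obtain c with k(k+1) = 2c and (k:ℤ)(k+1)/2 = c. -/
lemma tri_exists (k : ℕ) : ∃ c : ℤ, (k : ℤ) * ((k : ℤ) + 1) = 2 * c ∧
    (k : ℤ) * ((k : ℤ) + 1) / 2 = c := by
  obtain ⟨c, hc⟩ := Int.even_mul_succ_self (k : ℤ)
  refine ⟨c, by rw [hc]; ring, ?_⟩
  rw [hc, show c + c = 2 * c by ring]
  exact Int.mul_ediv_cancel_left _ two_ne_zero

lemma Cser_qinv (q x : ℂ) (hq0 : q ≠ 0) (hx0 : x ≠ 0) (m : ℤ) :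
    Cser x q⁻¹ m = Cser x q (-m) := by
  unfold Cser
  refine tsum_congr fun k => ?_
  obtain ⟨c, hc, he⟩ := tri_exists k
  -- the sum of range (k+1) equals c
  have hs1 : ((∑ j ∈ Finset.range (k + 1), j : ℕ) : ℤ) = c := by
    have h := Finset.sum_range_id_mul_two (k + 1)
    have h' : ((∑ j ∈ Finset.range (k + 1), j : ℕ) : ℤ) * 2 = ((k : ℤ) + 1) * k := by
      exact_mod_cast h
    linarith [hc, h', mul_comm ((k : ℤ) + 1) (k : ℤ)]
  have hQs : (q : ℂ) ^ (∑ j ∈ Finset.range (k + 1), j) = q ^ (c : ℤ) := by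
    rw [← zpow_natCast, hs1]
  have hQ : (q : ℂ) ^ (c : ℤ) ≠ 0 := zpow_ne_zero _ hq0
  have hY : (q : ℂ) ^ (m : ℤ) ≠ 0 := zpow_ne_zero _ hq0
  rw [he, pochG_inv x⁻¹ q (inv_ne_zero hx0) hq0 (k + 1), pochG_inv x q hx0 hq0 (k + 1),
    inv_inv, hQs, inv_zpow, zpow_add₀ hq0, zpow_add₀ hq0, zpow_k_mul, zpow_k_mul,
    show ((-m : ℤ)) = -m from rfl, zpow_neg]
  set P1 := pochG x q (k + 1)
  set P2 := pochG x⁻¹ q (k + 1)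
  set Q := (q : ℂ) ^ (c : ℤ)
  set Y := (q : ℂ) ^ (m : ℤ)
  set C0 : ℂ := ((-x⁻¹) ^ (k + 1) * Q⁻¹) * ((-x) ^ (k + 1) * Q⁻¹) with hC0def
  have hC0 : C0 ≠ 0 := by
    apply mul_ne_zero <;> apply mul_ne_zero
    · exact pow_ne_zero _ (neg_ne_zero.mpr (inv_ne_zero hx0))
    · exact inv_ne_zero hQ
    · exact pow_ne_zero _ (neg_ne_zero.mpr hx0)
    · exact inv_ne_zero hQ
  have hd : (-x⁻¹) ^ (k + 1) * Q⁻¹ * P1 * ((-x) ^ (k + 1) * Q⁻¹ * P2)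
      = C0 * (P2 * P1) := by rw [hC0def]; ring
  have hYk : Y ^ k ≠ 0 := pow_ne_zero _ hY
  have h1 : C0 = Q⁻¹ * Q⁻¹ := by
    have e1 : C0 = ((-x⁻¹) * (-x)) ^ (k + 1) * (Q⁻¹ * Q⁻¹) := by rw [hC0def, mul_pow]; ring
    rw [e1, neg_mul_neg, inv_mul_cancel₀ hx0, one_pow, one_mul]
  have hn : (-1 : ℂ) ^ k * (Q * Y ^ k)⁻¹ = C0 * ((-1) ^ k * (Q * Y⁻¹ ^ k)) := by
    rw [h1, mul_inv, inv_pow]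
    have h2 : Q⁻¹ * Q⁻¹ * ((-1 : ℂ) ^ k * (Q * (Y ^ k)⁻¹))
        = (Q⁻¹ * Q) * ((-1) ^ k * (Q⁻¹ * (Y ^ k)⁻¹)) := by ring
    rw [h2, inv_mul_cancel₀ hQ, one_mul]
  rw [hn, hd, mul_div_mul_left _ _ hC0]

lemma Aser_qinv (q x : ℂ) (hq0 : q ≠ 0) (hx0 : x ≠ 0) (m : ℤ) :
    Aser x q⁻¹ m = Bser x q (-m) := by
  unfold Bser Aser
  refine tsum_congr fun k => ?_
  obtain ⟨c, hc, he⟩ := tri_exists k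
  have hs : ((∑ j ∈ Finset.range k, j : ℕ) : ℤ) = c - k := by
    have h := Finset.sum_range_id_mul_two k
    have h' : ((∑ j ∈ Finset.range k, j : ℕ) : ℤ) * 2 = (k : ℤ) * ((k : ℤ) - 1) := by
      cases k with
      | zero => simp
      | succ n =>
        have h2 : ((∑ j ∈ Finset.range (n + 1), j : ℕ) : ℤ) * 2 = ((n : ℤ) + 1) * n := by
          exact_mod_cast h
        rw [h2]
        push_cast
        ring
    linarith [hc, h']
  have hQs : (q : ℂ) ^ (∑ j ∈ Finset.range k, j) = q ^ (c : ℤ) * (q ^ k)⁻¹ := by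
    rw [← zpow_natCast q (∑ j ∈ Finset.range k, j), hs, zpow_sub₀ hq0, zpow_natCast]
    rfl
  have hQ : (q : ℂ) ^ (c : ℤ) ≠ 0 := zpow_ne_zero _ hq0
  have hY : (q : ℂ) ^ (m : ℤ) ≠ 0 := zpow_ne_zero _ hq0
  have hX : (x : ℂ) ^ (m : ℤ) ≠ 0 := zpow_ne_zero _ hx0
  have hxq : (x ^ 2 * q⁻¹)⁻¹ = (x⁻¹) ^ 2 * q := by
    rw [mul_inv, inv_inv, inv_pow]
  rw [he, pochG_inv q⁻¹ q (inv_ne_zero hq0) hq0 k, pochG_inv (x ^ 2 * q⁻¹) q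
      (mul_ne_zero (pow_ne_zero _ hx0) (inv_ne_zero hq0)) hq0 k,
    inv_inv, hxq, hQs, inv_zpow, zpow_add₀ hq0, zpow_add₀ hq0, zpow_k_mul, zpow_k_mul,
    zpow_add₀ hx0, zpow_add₀ (inv_ne_zero hx0), zpow_natCast, zpow_natCast,
    show ((-m : ℤ)) = -m from rfl, zpow_neg, zpow_neg, inv_zpow]
  set P1 := pochG q q k
  set P2 := pochG ((x⁻¹) ^ 2 * q) q k
  set Q := (q : ℂ) ^ (c : ℤ)
  set Y := (q : ℂ) ^ (m : ℤ)
  set X := (x : ℂ) ^ (m : ℤ)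
  set C0 : ℂ := ((-q⁻¹) ^ k * (Q * (q ^ k)⁻¹)⁻¹) * ((-(x ^ 2 * q⁻¹)) ^ k * (Q * (q ^ k)⁻¹)⁻¹)
    with hC0def
  have hqk : (q : ℂ) ^ k ≠ 0 := pow_ne_zero _ hq0
  have hC0 : C0 ≠ 0 := by
    apply mul_ne_zero <;> apply mul_ne_zero
    · exact pow_ne_zero _ (neg_ne_zero.mpr (inv_ne_zero hq0))
    · exact inv_ne_zero (mul_ne_zero hQ (inv_ne_zero hqk))
    · exact pow_ne_zero _ (neg_ne_zero.mpr
        (mul_ne_zero (pow_ne_zero _ hx0) (inv_ne_zero hq0)))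
    · exact inv_ne_zero (mul_ne_zero hQ (inv_ne_zero hqk))
  have hd : (-q⁻¹) ^ k * (Q * (q ^ k)⁻¹)⁻¹ * P1 * ((-(x ^ 2 * q⁻¹)) ^ k *
      (Q * (q ^ k)⁻¹)⁻¹ * P2) = C0 * (P1 * P2) := by rw [hC0def]; ring
  have hYk : Y ^ k ≠ 0 := pow_ne_zero _ hY
  have hxk : x ^ k ≠ 0 := pow_ne_zero _ hx0
  have h1 : C0 = x ^ (2 * k) * (Q⁻¹ * Q⁻¹) := by
    have e1 : C0 = ((-q⁻¹) * (-(x ^ 2 * q⁻¹))) ^ k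
        * ((Q * (q ^ k)⁻¹)⁻¹ * (Q * (q ^ k)⁻¹)⁻¹) := by rw [hC0def, mul_pow]; ring
    rw [e1, neg_mul_neg]
    field_simp
    ring_nf
    rw [mul_assoc, ← mul_pow, mul_inv_cancel₀ hq0, one_pow, mul_one]
  have hn : (-1 : ℂ) ^ k * (Q * Y ^ k)⁻¹ * (x ^ k * X)
      = C0 * ((-1) ^ k * (Q * Y⁻¹ ^ k) * (x⁻¹ ^ k * X⁻¹⁻¹)) := by
    rw [h1, inv_inv, inv_pow, inv_pow, mul_inv]
    have e3 : x ^ (2 * k) * (Q⁻¹ * Q⁻¹) * ((-1 : ℂ) ^ k * (Q * (Y ^ k)⁻¹) * ((x ^ k)⁻¹ * X))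
        = (Q⁻¹ * Q) * (x ^ k * (x ^ k)⁻¹) * ((-1) ^ k * (Q⁻¹ * (Y ^ k)⁻¹) * (x ^ k * X)) := by
      rw [two_mul, pow_add]; ring
    rw [e3, inv_mul_cancel₀ hQ, mul_inv_cancel₀ hxk, one_mul, one_mul]
  rw [hn, hd, mul_div_mul_left _ _ hC0]


theorem series_q_inv (q x : ℂ) (hq : ‖q‖ < 1) (hq0 : q ≠ 0) (hx0 : x ≠ 0) (m : ℤ) :
    Cser x q⁻¹ m = Cser x q (-m) ∧
    Aser x q⁻¹ m = Bser x q (-m) ∧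
    Bser x q⁻¹ m = Aser x q (-m) := by
  refine ⟨Cser_qinv q x hq0 hx0 m, Aser_qinv q x hq0 hx0 m, ?_⟩
  have h := Aser_qinv q x⁻¹ hq0 (inv_ne_zero hx0) m
  rw [Bser, h, Bser, inv_inv]
end

section
/- Euler's identity: for |q|<1, Σ_{n=0}^∞ q^{n^2} / (q;q)_n^2 = 1/(q;q)_∞. -/
open Finset Filter Topology

/-- (q;q)_n = ∏_{j=1}^n (1 - q^j). -/
noncomputable def qPoch (q : ℂ) (n : ℕ) : ℂ := ∏ j ∈ Finset.range n, (1 - q ^ (j + 1))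



lemma qPoch_succ (q : ℂ) (n : ℕ) : qPoch q (n + 1) = qPoch q n * (1 - q ^ (n + 1)) :=
  Finset.prod_range_succ _ n

lemma qPoch_zero (q : ℂ) : qPoch q 0 = 1 := rfl

lemma qPoch_ne_zero {q : ℂ} (hq : ‖q‖ < 1) (n : ℕ) : qPoch q n ≠ 0 := by
  refine Finset.prod_ne_zero_iff.2 fun j _ => ?_
  intro h
  have : (1 : ℂ) = q ^ (j + 1) := by linear_combination h
  have h2 : ‖q ^ (j + 1)‖ < 1 := by
    rw [norm_pow]
    exact pow_lt_one₀ (norm_nonneg q) hq (Nat.succ_ne_zero j)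
  rw [← this] at h2
  simp at h2

lemma qPoch_add (q : ℂ) (m n : ℕ) :
    qPoch q (m + n) = qPoch q m * ∏ j ∈ Finset.range n, (1 - q ^ (m + j + 1)) := by
  rw [qPoch, Finset.prod_range_add]
  rfl

/-- Gaussian binomial coefficient (as a complex number). -/
noncomputable def gb (q : ℂ) (N m : ℕ) : ℂ :=
  if m ≤ N then qPoch q N / (qPoch q m * qPoch q (N - m)) else 0

lemma gb_zero (q : ℂ) {hq : ‖q‖ < 1} (N : ℕ) : gb q N 0 = 1 := by
  simp [gb, qPoch_zero, div_self (qPoch_ne_zero hq N)]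

lemma gb_self (q : ℂ) {hq : ‖q‖ < 1} (N : ℕ) : gb q N N = 1 := by
  simp [gb, qPoch_zero, div_self (qPoch_ne_zero hq N)]

lemma gb_of_gt (q : ℂ) {N m : ℕ} (h : N < m) : gb q N m = 0 := by
  simp [gb, Nat.not_le.2 h]

lemma gb_pascal {q : ℂ} (hq : ‖q‖ < 1) (N m : ℕ) :
    gb q (N + 1) (m + 1) = gb q N (m + 1) + q ^ (N - m) * gb q N m := by
  rcases Nat.lt_or_ge N m with h | h
  · -- m > N : everything zero
    rw [gb_of_gt q (by omega), gb_of_gt q (by omega), gb_of_gt q h]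
    ring
  rcases Nat.eq_or_lt_of_le h with rfl | hlt
  · -- m = N
    rw [gb_self q (hq := hq), gb_of_gt q (by omega), gb_self q (hq := hq)]
    simp
  · -- m + 1 ≤ N
    obtain ⟨k, rfl⟩ : ∃ k, N = m + 1 + k := ⟨N - (m + 1), by omega⟩
    have h1 : m + 1 + k + 1 - (m + 1) = k + 1 := by omega
    have h2 : m + 1 + k - (m + 1) = k := by omega
    have h3 : m + 1 + k - m = k + 1 := by omega
    rw [gb, gb, gb, if_pos (by omega), if_pos (by omega), if_pos (by omega), h1, h2, h3]
    have e1 : qPoch q (m + 1 + k + 1) = qPoch q (m + 1 + k) * (1 - q ^ (m + 1 + k + 1)) :=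
      qPoch_succ q _
    have e2 : qPoch q (k + 1) = qPoch q k * (1 - q ^ (k + 1)) := qPoch_succ q _
    have e3 : qPoch q (m + 1) = qPoch q m * (1 - q ^ (m + 1)) := qPoch_succ q _
    have n1 := qPoch_ne_zero hq (m + 1 + k)
    have n2 := qPoch_ne_zero hq k
    have n3 := qPoch_ne_zero hq m
    have n4 : (1 - q ^ (k + 1)) ≠ 0 := by
      have := qPoch_ne_zero hq (k + 1); rw [e2] at this; exact right_ne_zero_of_mul this
    have n5 : (1 - q ^ (m + 1)) ≠ 0 := by
      have := qPoch_ne_zero hq (m + 1); rw [e3] at this; exact right_ne_zero_of_mul this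
    rw [e1, e2, e3]
    field_simp
    ring


lemma durfee_finite {q : ℂ} (hq : ‖q‖ < 1) (N : ℕ) : ∀ a : ℕ,
    ∑ m ∈ Finset.range (N + 1), q ^ (m ^ 2 + a * m) * gb q N m / qPoch q (m + a)
      = (qPoch q (N + a))⁻¹ := by
  induction N with
  | zero =>
    intro a
    rw [Finset.sum_range_one, gb_zero q (hq := hq)]
    simp
  | succ N ih =>
    intro a
    rw [Finset.sum_range_succ']
    have key : ∀ k ∈ Finset.range (N + 1),
        q ^ ((k+1) ^ 2 + a * (k+1)) * gb q (N+1) (k+1) / qPoch q ((k+1) + a)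
        = q ^ ((k+1) ^ 2 + a * (k+1)) * gb q N (k+1) / qPoch q ((k+1) + a)
          + q ^ (N + a + 1) * (q ^ (k ^ 2 + (a+1) * k) * gb q N k / qPoch q (k + (a+1))) := by
      intro k hk
      rw [Finset.mem_range] at hk
      rw [gb_pascal hq N k]
      have hNk : N - k + ((k+1)^2 + a*(k+1)) = (N + a + 1) + (k^2 + (a+1)*k) := by
        have : k ≤ N := by omega
        nlinarith [Nat.sub_add_cancel this]
      have : q ^ ((k+1) ^ 2 + a * (k+1)) * (q ^ (N - k) * gb q N k)
          = q ^ (N + a + 1) * (q ^ (k ^ 2 + (a+1) * k) * gb q N k) := by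
        rw [← mul_assoc, ← pow_add, ← mul_assoc, ← pow_add]
        rw [add_comm ((k+1)^2 + a*(k+1)) (N-k), hNk, pow_add]
      have harg : (k + 1) + a = k + (a + 1) := by omega
      rw [mul_add, add_div, this, harg]
      ring
    rw [Finset.sum_congr rfl key, Finset.sum_add_distrib, ← Finset.mul_sum, ih (a+1)]
    have reassemble :
        (∑ k ∈ Finset.range (N + 1),
            q ^ ((k+1) ^ 2 + a * (k+1)) * gb q N (k+1) / qPoch q ((k+1) + a))
          + q ^ (0 ^ 2 + a * 0) * gb q (N+1) 0 / qPoch q (0 + a)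
        = ∑ m ∈ Finset.range (N + 2), q ^ (m ^ 2 + a * m) * gb q N m / qPoch q (m + a) := by
      rw [Finset.sum_range_succ' (fun m => q ^ (m ^ 2 + a * m) * gb q N m / qPoch q (m + a)) (N+1)]
      rw [gb_zero q (hq := hq), gb_zero q (hq := hq)]
    rw [add_right_comm, reassemble, Finset.sum_range_succ, gb_of_gt q (Nat.lt_succ_self N)]
    rw [mul_zero, zero_div, add_zero, ih a]
    rw [show N + (a + 1) = (N + a) + 1 from by omega, show N + 1 + a = (N + a) + 1 from by omega]
    rw [qPoch_succ]
    have n1 := qPoch_ne_zero hq (N + a)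
    have n2 : (1 - q ^ (N + a + 1)) ≠ 0 := by
      have := qPoch_ne_zero hq ((N + a) + 1)
      rw [qPoch_succ] at this
      exact right_ne_zero_of_mul this
    rw [show (N + a) + 1 = N + a + 1 from rfl]
    field_simp
    ring


/-- Weierstrass product inequality. -/
lemma weier (f : ℕ → ℝ) (s : Finset ℕ) (h0 : ∀ i ∈ s, 0 ≤ f i) (h1 : ∀ i ∈ s, f i ≤ 1) :
    1 - ∑ i ∈ s, f i ≤ ∏ i ∈ s, (1 - f i) := by
  induction s using Finset.cons_induction with
  | empty => simp
  | cons a s ha ih =>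
    rw [Finset.sum_cons, Finset.prod_cons]
    have h0a := h0 a (Finset.mem_cons_self a s)
    have h1a := h1 a (Finset.mem_cons_self a s)
    have ih' := ih (fun i hi => h0 i (Finset.mem_cons_of_mem hi))
      (fun i hi => h1 i (Finset.mem_cons_of_mem hi))
    have hs : 0 ≤ ∑ i ∈ s, f i := Finset.sum_nonneg (fun i hi => h0 i (Finset.mem_cons_of_mem hi))
    nlinarith

lemma qPoch_norm_lower {q : ℂ} (hq : ‖q‖ < 1) :
    ∃ c : ℝ, 0 < c ∧ ∀ n : ℕ, c ≤ ‖∏ j ∈ Finset.range n, (1 - q ^ (j + 1))‖ := by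
  have hx0 : 0 ≤ ‖q‖ := norm_nonneg q
  obtain ⟨J, hJ⟩ : ∃ J : ℕ, ‖q‖ ^ (J + 1) * (1 - ‖q‖)⁻¹ ≤ 1 / 2 := by
    have h := tendsto_pow_atTop_nhds_zero_of_lt_one hx0 hq
    have h2 : Tendsto (fun n : ℕ => ‖q‖ ^ (n + 1) * (1 - ‖q‖)⁻¹) atTop (𝓝 (0 * (1 - ‖q‖)⁻¹)) :=
      ((h.comp (tendsto_add_atTop_nat 1)).mul_const _)
    rw [zero_mul] at h2
    exact (h2.eventually_le_const (show (0:ℝ) < 1/2 by norm_num)).exists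
  have hfac0 : ∀ j : ℕ, 0 < 1 - ‖q‖ ^ (j + 1) := by
    intro j
    have : ‖q‖ ^ (j + 1) < 1 := pow_lt_one₀ hx0 hq (Nat.succ_ne_zero j)
    linarith
  have htail : ∀ n : ℕ, ∑ j ∈ Finset.Ico J n, ‖q‖ ^ (j + 1) ≤ 1 / 2 := by
    intro n
    rcases le_or_gt n J with h | h
    · rw [Finset.Ico_eq_empty (by omega)]; norm_num
    calc ∑ j ∈ Finset.Ico J n, ‖q‖ ^ (j + 1)
        ≤ ∑' k : ℕ, ‖q‖ ^ (J + 1 + k) := by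
          rw [show Finset.Ico J n = Finset.map ⟨fun k => J + k, add_right_injective J⟩
              (Finset.range (n - J)) from ?_]
          · rw [Finset.sum_map]
            simp only [Function.Embedding.coeFn_mk,
              show ∀ k : ℕ, J + k + 1 = J + 1 + k from fun k => by omega]
            apply Summable.sum_le_tsum _ (fun k _ => by positivity)
            have : Summable (fun k : ℕ => ‖q‖ ^ (J + 1) * ‖q‖ ^ k) :=
              (summable_geometric_of_lt_one hx0 hq).mul_left _
            apply this.congr
            intro k
            rw [← pow_add]
          · ext m
            simp only [Finset.mem_Ico, Finset.mem_map, Finset.mem_range,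
              Function.Embedding.coeFn_mk]
            constructor
            · rintro ⟨h1, h2⟩; exact ⟨m - J, by omega, by omega⟩
            · rintro ⟨k, hk, rfl⟩; omega
      _ = ‖q‖ ^ (J + 1) * (1 - ‖q‖)⁻¹ := by
          simp only [pow_add]
          rw [tsum_mul_left, tsum_geometric_of_lt_one hx0 hq]
      _ ≤ 1 / 2 := hJ
  have hrJ : 0 < ∏ j ∈ Finset.range J, (1 - ‖q‖ ^ (j + 1)) :=
    Finset.prod_pos (fun j _ => hfac0 j)
  refine ⟨(∏ j ∈ Finset.range J, (1 - ‖q‖ ^ (j + 1))) * (1 / 2),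
    by positivity, fun n => ?_⟩
  have step1 : (∏ j ∈ Finset.range J, (1 - ‖q‖ ^ (j + 1))) * (1 / 2)
      ≤ ∏ j ∈ Finset.range n, (1 - ‖q‖ ^ (j + 1)) := by
    rcases le_or_gt n J with h | h
    · have key : (∏ j ∈ Finset.range n, (1 - ‖q‖ ^ (j + 1)))
          * ∏ j ∈ Finset.Ico n J, (1 - ‖q‖ ^ (j + 1))
          = ∏ j ∈ Finset.range J, (1 - ‖q‖ ^ (j + 1)) :=
        Finset.prod_range_mul_prod_Ico _ h
      have h1 : ∏ j ∈ Finset.Ico n J, (1 - ‖q‖ ^ (j + 1)) ≤ 1 :=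
        Finset.prod_le_one (fun j _ => (hfac0 j).le)
          (fun j _ => by have := pow_nonneg hx0 (j+1); linarith)
      have h2 : 0 < ∏ j ∈ Finset.range n, (1 - ‖q‖ ^ (j + 1)) :=
        Finset.prod_pos (fun j _ => hfac0 j)
      nlinarith
    · have key : (∏ j ∈ Finset.range J, (1 - ‖q‖ ^ (j + 1)))
          * ∏ j ∈ Finset.Ico J n, (1 - ‖q‖ ^ (j + 1))
          = ∏ j ∈ Finset.range n, (1 - ‖q‖ ^ (j + 1)) :=
        Finset.prod_range_mul_prod_Ico _ h.le
      have hw : 1 - ∑ j ∈ Finset.Ico J n, ‖q‖ ^ (j + 1)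
          ≤ ∏ j ∈ Finset.Ico J n, (1 - ‖q‖ ^ (j + 1)) :=
        weier _ _ (fun j _ => pow_nonneg hx0 _)
          (fun j _ => le_of_lt (pow_lt_one₀ hx0 hq (Nat.succ_ne_zero j)))
      have := htail n
      nlinarith
  refine le_trans step1 ?_
  rw [norm_prod]
  apply Finset.prod_le_prod (fun j _ => (hfac0 j).le)
  intro j _
  calc 1 - ‖q‖ ^ (j + 1) = ‖(1:ℂ)‖ - ‖q ^ (j + 1)‖ := by simp
    _ ≤ ‖1 - q ^ (j + 1)‖ := norm_sub_norm_le _ _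


lemma qPoch_norm_lower' {q : ℂ} (hq : ‖q‖ < 1) :
    ∃ c : ℝ, 0 < c ∧ ∀ n : ℕ, c ≤ ‖qPoch q n‖ := qPoch_norm_lower hq


lemma one_sub_pow_ne_zero {q : ℂ} (hq : ‖q‖ < 1) (n : ℕ) : 1 - q ^ (n + 1) ≠ 0 := by
  have h2 : ‖q ^ (n + 1)‖ < 1 := by
    rw [norm_pow]; exact pow_lt_one₀ (norm_nonneg q) hq (Nat.succ_ne_zero n)
  intro h
  have : (1 : ℂ) = q ^ (n + 1) := by linear_combination h
  rw [← this] at h2; simp at h2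

lemma qPoch_norm_upper {q : ℂ} (hq : ‖q‖ < 1) (n : ℕ) :
    ‖qPoch q n‖ ≤ Real.exp ((1 - ‖q‖)⁻¹) := by
  have hx0 : 0 ≤ ‖q‖ := norm_nonneg q
  rw [qPoch, norm_prod]
  calc ∏ j ∈ Finset.range n, ‖1 - q ^ (j + 1)‖
      ≤ ∏ j ∈ Finset.range n, Real.exp (‖q‖ ^ (j + 1)) := by
        apply Finset.prod_le_prod (fun j _ => norm_nonneg _)
        intro j _
        calc ‖1 - q ^ (j + 1)‖ ≤ ‖(1:ℂ)‖ + ‖q ^ (j + 1)‖ := norm_sub_le _ _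
          _ = 1 + ‖q‖ ^ (j + 1) := by simp
          _ ≤ Real.exp (‖q‖ ^ (j + 1)) := by
              have := Real.add_one_le_exp (‖q‖ ^ (j + 1)); linarith
    _ = Real.exp (∑ j ∈ Finset.range n, ‖q‖ ^ (j + 1)) := (Real.exp_sum _ _).symm
    _ ≤ Real.exp ((1 - ‖q‖)⁻¹) := by
        apply Real.exp_le_exp.2
        calc ∑ j ∈ Finset.range n, ‖q‖ ^ (j + 1)
            ≤ ∑ j ∈ Finset.range n, ‖q‖ ^ j :=
              Finset.sum_le_sum (fun j _ =>
                pow_le_pow_of_le_one hx0 hq.le (Nat.le_succ j))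
          _ ≤ ∑' j : ℕ, ‖q‖ ^ j :=
              Summable.sum_le_tsum _ (fun j _ => pow_nonneg hx0 j)
                (summable_geometric_of_lt_one hx0 hq)
          _ = (1 - ‖q‖)⁻¹ := tsum_geometric_of_lt_one hx0 hq

lemma qPoch_multipliable {q : ℂ} (hq : ‖q‖ < 1) :
    Multipliable (fun j : ℕ => 1 - q ^ (j + 1)) := by
  have hx0 : 0 ≤ ‖q‖ := norm_nonneg q
  have := Complex.multipliable_of_summable_log (f := fun j : ℕ => 1 - q ^ (j + 1)) ?_
  · exact this
  apply Summable.of_norm_bounded_eventually_nat (g := fun n => 3/2 * ‖q‖ ^ (n + 1))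
  · apply Summable.mul_left
    have : Summable (fun k : ℕ => ‖q‖ * ‖q‖ ^ k) :=
      (summable_geometric_of_lt_one hx0 hq).mul_left _
    apply this.congr
    intro k
    rw [pow_succ]; ring
  · have h := tendsto_pow_atTop_nhds_zero_of_lt_one hx0 hq
    have h2 := (h.comp (tendsto_add_atTop_nat 1)).eventually_le_const
      (show (0:ℝ) < 1/2 by norm_num)
    filter_upwards [h2] with n hn
    have hz : ‖-q ^ (n + 1)‖ ≤ 1/2 := by
      rw [norm_neg, norm_pow]; exact hn
    have := Complex.norm_log_one_add_half_le_self hz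
    rw [show (1 : ℂ) + -q ^ (n + 1) = 1 - q ^ (n + 1) by ring] at this
    calc ‖Complex.log (1 - q ^ (n + 1))‖ ≤ 3/2 * ‖-q ^ (n + 1)‖ := this
      _ = 3/2 * ‖q‖ ^ (n + 1) := by rw [norm_neg, norm_pow]

lemma gb_tendsto {q : ℂ} (hq : ‖q‖ < 1) (m : ℕ) :
    Tendsto (fun N => gb q N m) atTop (𝓝 (qPoch q m)⁻¹) := by
  have hev : ∀ᶠ N in atTop, gb q N m
      = (∏ i ∈ Finset.range m, (1 - q ^ (N - m + i + 1))) / qPoch q m := by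
    filter_upwards [eventually_ge_atTop m] with N hN
    rw [gb, if_pos hN]
    have : qPoch q N = qPoch q (N - m) * ∏ j ∈ Finset.range m, (1 - q ^ (N - m + j + 1)) := by
      rw [← qPoch_add, Nat.sub_add_cancel hN]
    rw [this]
    field_simp [qPoch_ne_zero hq (N - m), qPoch_ne_zero hq m]
  apply Tendsto.congr' (EventuallyEq.symm hev)
  have hlim : Tendsto (fun N => ∏ i ∈ Finset.range m, (1 - q ^ (N - m + i + 1))) atTop
      (𝓝 (∏ i ∈ Finset.range m, (1 : ℂ))) := by
    apply tendsto_finset_prod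
    intro i _
    have hsub : Tendsto (fun N : ℕ => N - m + i + 1) atTop atTop := by
      apply Filter.tendsto_atTop_atTop.2
      intro b
      exact ⟨b + m, fun a ha => by omega⟩
    have := (tendsto_pow_atTop_nhds_zero_of_norm_lt_one hq).comp hsub
    have h2 : Tendsto (fun N : ℕ => (1:ℂ) - q ^ (N - m + i + 1)) atTop (𝓝 (1 - 0)) :=
      tendsto_const_nhds.sub this
    simpa using h2
  have := hlim.div_const (qPoch q m)
  simpa using this


/-- Euler's identity. -/
theorem euler_identity (q : ℂ) (hq : ‖q‖ < 1) :
    ∑' n : ℕ, q ^ (n ^ 2) / (qPoch q n) ^ 2 = (∏' j : ℕ, (1 - q ^ (j + 1)))⁻¹ := by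
  obtain ⟨c, hc, hlow⟩ := qPoch_norm_lower' hq
  set Mb := Real.exp ((1 - ‖q‖)⁻¹) with hMb
  have hx0 : 0 ≤ ‖q‖ := norm_nonneg q
  set F : ℕ → ℕ → ℂ := fun N m => q ^ (m ^ 2) * gb q N m / qPoch q m with hF
  -- each row tsum equals the finite sum, which is (qPoch q N)⁻¹
  have hrow : ∀ N, (∑' m, F N m) = (qPoch q N)⁻¹ := by
    intro N
    have h0 : ∀ m ∉ Finset.range (N + 1), F N m = 0 := by
      intro m hm
      rw [Finset.mem_range, not_lt] at hm
      simp [hF, gb_of_gt q (show N < m by omega)]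
    rw [tsum_eq_sum h0]
    have := durfee_finite hq N 0
    simpa using this
  -- dominated convergence
  have hbound : ∀ N m, ‖F N m‖ ≤ ‖q‖ ^ m * (Mb / (c * c * c)) := by
    intro N m
    rcases Nat.lt_or_ge N m with h | h
    · simp only [hF, gb_of_gt q h, mul_zero, zero_div, norm_zero]
      positivity
    · have h1 : ‖gb q N m‖ ≤ Mb / (c * c) := by
        rw [gb, if_pos h, norm_div, norm_mul]
        apply div_le_div₀ (by positivity) (qPoch_norm_upper hq N) (by positivity)
        exact mul_le_mul (hlow m) (hlow (N - m)) hc.le (le_trans hc.le (hlow m))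
      have h2 : ‖q ^ (m ^ 2)‖ ≤ ‖q‖ ^ m := by
        rw [norm_pow]
        exact pow_le_pow_of_le_one hx0 hq.le (Nat.le_self_pow two_ne_zero m)
      calc ‖F N m‖ = ‖q ^ (m ^ 2)‖ * ‖gb q N m‖ / ‖qPoch q m‖ := by
            rw [hF]; simp [norm_div, norm_mul]
        _ ≤ ‖q‖ ^ m * (Mb / (c * c)) / c := by
            apply div_le_div₀ (by positivity)
              (mul_le_mul h2 h1 (norm_nonneg _) (by positivity)) hc (hlow m)
        _ = ‖q‖ ^ m * (Mb / (c * c * c)) := by ring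
  have hsummable : Summable (fun m : ℕ => ‖q‖ ^ m * (Mb / (c * c * c))) :=
    (summable_geometric_of_lt_one hx0 hq).mul_right _
  have hpointwise : ∀ m, Tendsto (fun N => F N m) atTop
      (𝓝 (q ^ (m ^ 2) / (qPoch q m) ^ 2)) := by
    intro m
    have h1 : Tendsto (fun N => q ^ (m ^ 2) * gb q N m / qPoch q m) atTop
        (𝓝 (q ^ (m ^ 2) * (qPoch q m)⁻¹ / qPoch q m)) :=
      (Tendsto.mul tendsto_const_nhds (gb_tendsto hq m)).div_const _
    have : q ^ (m ^ 2) * (qPoch q m)⁻¹ / qPoch q m = q ^ (m ^ 2) / (qPoch q m) ^ 2 := by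
      rw [pow_two]
      field_simp
    rw [← this]
    exact h1
  have hDC : Tendsto (fun N => ∑' m, F N m) atTop
      (𝓝 (∑' m, q ^ (m ^ 2) / (qPoch q m) ^ 2)) :=
    tendsto_tsum_of_dominated_convergence hsummable hpointwise
      (Eventually.of_forall hbound)
  -- product convergence
  have hP : Tendsto (fun N => qPoch q N) atTop (𝓝 (∏' j : ℕ, (1 - q ^ (j + 1)))) :=
    (qPoch_multipliable hq).hasProd.tendsto_prod_nat
  -- combine
  have hinv : Tendsto (fun N => (qPoch q N)⁻¹) atTop
      (𝓝 (∑' m, q ^ (m ^ 2) / (qPoch q m) ^ 2)) := by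
    apply hDC.congr
    intro N
    exact hrow N
  have hmul : Tendsto (fun N => qPoch q N * (qPoch q N)⁻¹) atTop
      (𝓝 ((∏' j : ℕ, (1 - q ^ (j + 1))) * ∑' m, q ^ (m ^ 2) / (qPoch q m) ^ 2)) :=
    hP.mul hinv
  have hone : Tendsto (fun N => qPoch q N * (qPoch q N)⁻¹) atTop (𝓝 (1 : ℂ)) := by
    apply tendsto_const_nhds.congr
    intro N
    rw [mul_inv_cancel₀ (qPoch_ne_zero hq N)]
  have key : (∏' j : ℕ, (1 - q ^ (j + 1))) * (∑' m, q ^ (m ^ 2) / (qPoch q m) ^ 2) = 1 :=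
    tendsto_nhds_unique hmul hone
  exact (inv_eq_of_mul_eq_one_right key).symm
end
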